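/- arXiv:2405.08631 — 6 statements merged into one kernel-verified Lean document; each statement's English description precedes it below -/
import Mathlib

section
/- Let f : ℝ → ℝ be convex, continuously differentiable with f'(x) < 0 for all x (non-vanishing derivative, decreasing), and suppose f has a root r with f(r) = 0. If x₀ satisfies f(x₀) ≥ 0, then the Newton iterates x_{k+1} = x_k - f(x_k)/f'(x_k) form a monotonically increasing sequence that converges to a root of f. -/
/-- Tangent line lower bound for a convex differentiable function. -/
lemma tangent_le_aux (f : ℝ → ℝ) (hconv : ConvexOn ℝ Set.univ f)
    (hdiff : Differentiable ℝ f) (a b : ℝ) :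
    f a + deriv f a * (b - a) ≤ f b := by
  rcases lt_trichotomy a b with h | h | h
  · have := hconv.deriv_le_slope (Set.mem_univ a) (Set.mem_univ b) h (hdiff a)
    rw [slope_def_field] at this
    have hba : (0:ℝ) < b - a := by linarith
    have := (le_div_iff₀ hba).mp this
    linarith
  · simp [h]
  · have := hconv.slope_le_deriv (Set.mem_univ b) (Set.mem_univ a) h (hdiff a)
    rw [slope_def_field] at this
    have hba : (0:ℝ) < a - b := by linarith
    have := (div_le_iff₀ hba).mp this
    nlinarith

/-- Newton's method convergence for a convex, continuously differentiable,
decreasing function with a root: iterates starting at a point with `f x₀ ≥ 0`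
are monotone increasing and converge to a root of `f`. -/
theorem newton_converges
    (f : ℝ → ℝ)
    (hconv : ConvexOn ℝ Set.univ f)
    (hdiff : Differentiable ℝ f)
    (hcont : Continuous (deriv f))
    (hderiv : ∀ x : ℝ, deriv f x < 0)
    (r : ℝ) (hr : f r = 0)
    (x : ℕ → ℝ)
    (hx0 : 0 ≤ f (x 0))
    (hiter : ∀ k : ℕ, x (k + 1) = x k - f (x k) / deriv f (x k)) :
    Monotone x ∧ ∃ L : ℝ, Filter.Tendsto x Filter.atTop (nhds L) ∧ f L = 0 := by
  have hanti : StrictAnti f := strictAnti_of_deriv_neg hderiv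
  -- all iterates have nonnegative f value
  have hfpos : ∀ k, 0 ≤ f (x k) := by
    intro k
    induction k with
    | zero => exact hx0
    | succ n ih =>
      have h := tangent_le_aux f hconv hdiff (x n) (x (n+1))
      have hne : deriv f (x n) ≠ 0 := (hderiv (x n)).ne
      have key : deriv f (x n) * (x (n+1) - x n) = - f (x n) := by
        rw [hiter n]; field_simp; ring
      linarith
  have hmono : Monotone x := by
    apply monotone_nat_of_le_succ
    intro n
    rw [hiter n]
    have h1 := hfpos n
    have h2 := hderiv (x n)
    have : f (x n) / deriv f (x n) ≤ 0 := div_nonpos_of_nonneg_of_nonpos h1 h2.le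
    linarith
  -- bounded above by r
  have hbdd : ∀ k, x k ≤ r := by
    intro k
    by_contra h
    push_neg at h
    have := hanti h
    rw [hr] at this
    exact absurd (hfpos k) (not_le.mpr this)
  have hbdd' : BddAbove (Set.range x) := ⟨r, by rintro _ ⟨k, rfl⟩; exact hbdd k⟩
  have htend : Filter.Tendsto x Filter.atTop (nhds (⨆ k, x k)) :=
    tendsto_atTop_ciSup hmono hbdd'
  set L := ⨆ k, x k with hL
  refine ⟨hmono, L, htend, ?_⟩
  -- pass to limit in iteration
  have htend' : Filter.Tendsto (fun k => x (k+1)) Filter.atTop (nhds L) :=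
    htend.comp (Filter.tendsto_add_atTop_nat 1)
  have htend2 : Filter.Tendsto (fun k => x k - f (x k) / deriv f (x k)) Filter.atTop
      (nhds (L - f L / deriv f L)) := by
    apply Filter.Tendsto.sub htend
    exact ((hdiff.continuous.tendsto L).comp htend).div ((hcont.tendsto L).comp htend)
      (hderiv L).ne
  have heq : L = L - f L / deriv f L := by
    apply tendsto_nhds_unique _ htend2
    simpa only [← hiter] using htend'
  have : f L / deriv f L = 0 := by linarith
  rcases div_eq_zero_iff.mp this with h | h
  · exact h
  · exact absurd h (hderiv L).ne
end

section
/- Consider the minimization over x ∈ ℝ^d of (1/2) xᵀΣx - vᵀx + λ‖x‖₂, where Σ is a diagonal matrix with nonnegative diagonal entries and λ > 0. If v_i = 0 for every index i with Σ_{ii} = 0, then a finite minimizer exists. -/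
open Finset in
/-- Existence of a finite minimizer of `x ↦ (1/2) xᵀΣx - vᵀx + λ‖x‖₂` when `Σ`
is diagonal nonnegative, `λ > 0`, and `v` vanishes on the kernel of `Σ`. -/
theorem bcd_minimizer_exists
    (d : ℕ) (S : Fin d → ℝ) (hS : ∀ i, 0 ≤ S i)
    (v : EuclideanSpace ℝ (Fin d)) (lam : ℝ) (hlam : 0 < lam)
    (hker : ∀ i, S i = 0 → v i = 0) :
    ∃ xstar : EuclideanSpace ℝ (Fin d), ∀ x : EuclideanSpace ℝ (Fin d),
      (1 / 2) * (∑ i, S i * (xstar i) ^ 2) - (∑ i, v i * xstar i) + lam * ‖xstar‖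
        ≤ (1 / 2) * (∑ i, S i * (x i) ^ 2) - (∑ i, v i * x i) + lam * ‖x‖ := by
  set f : EuclideanSpace ℝ (Fin d) → ℝ := fun x =>
    (1 / 2) * (∑ i, S i * (x i) ^ 2) - (∑ i, v i * x i) + lam * ‖x‖ with hf
  have hcont : Continuous f := by
    have hproj : ∀ i : Fin d, Continuous fun x : EuclideanSpace ℝ (Fin d) => x i :=
      fun i => (EuclideanSpace.proj (𝕜 := ℝ) i).continuous
    apply Continuous.add
    · apply Continuous.sub
      · exact continuous_const.mul (continuous_finset_sum _ fun i _ =>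
          continuous_const.mul ((hproj i).pow 2))
      · exact continuous_finset_sum _ fun i _ => continuous_const.mul (hproj i)
    · exact continuous_const.mul continuous_norm
  set C : ℝ := ∑ i, (if S i = 0 then 0 else v i ^ 2 / (2 * S i)) with hC
  have hlb : ∀ x : EuclideanSpace ℝ (Fin d), lam * ‖x‖ - C ≤ f x := by
    intro x
    have key : -C ≤ (1 / 2) * (∑ i, S i * (x i) ^ 2) - (∑ i, v i * x i) := by
      have h1 : (1 / 2) * (∑ i, S i * (x i) ^ 2) - (∑ i, v i * x i)
          = ∑ i, ((1 / 2) * (S i * (x i) ^ 2) - v i * x i) := by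
        rw [Finset.sum_sub_distrib, Finset.mul_sum]
      rw [h1, hC, ← Finset.sum_neg_distrib]
      apply Finset.sum_le_sum
      intro i _
      by_cases h : S i = 0
      · simp [h, hker i h]
      · have hpos : 0 < S i := lt_of_le_of_ne (hS i) (Ne.symm h)
        rw [if_neg h]
        have h2 : 0 ≤ (S i * x i - v i) ^ 2 / (2 * S i) :=
          div_nonneg (sq_nonneg _) (by linarith)
        have h3 : (S i * x i - v i) ^ 2 / (2 * S i)
            = (1 / 2) * (S i * x i ^ 2) - v i * x i + v i ^ 2 / (2 * S i) := by
          field_simp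
          ring
        linarith [h3 ▸ h2]
    have := add_le_add_right key (lam * ‖x‖)
    simp only [hf]
    linarith
  have hlim : Filter.Tendsto f (Filter.cocompact _) Filter.atTop := by
    apply Filter.tendsto_atTop_mono hlb
    have h1 : Filter.Tendsto (fun x : EuclideanSpace ℝ (Fin d) => lam * ‖x‖)
        (Filter.cocompact _) Filter.atTop :=
      (tendsto_norm_cocompact_atTop).const_mul_atTop hlam
    exact Filter.tendsto_atTop_add_const_right _ (-C) h1 |>.congr (fun x => by ring)
  obtain ⟨xstar, hxstar⟩ := hcont.exists_forall_le hlim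
  exact ⟨xstar, hxstar⟩
end

section
/- Consider minimizing f(x) = (1/2) xᵀΣx - vᵀx + λ‖x‖₂ with Σ diagonal positive semidefinite, λ > 0, v vanishing on the kernel of Σ, and ‖v‖₂ > λ. Then any minimizer x⋆ is nonzero and satisfies x⋆ = (Σ + (λ/‖x⋆‖₂) I)⁻¹ v. -/
open Finset in
/-- When `‖v‖₂ > λ`, any minimizer of the block-coordinate objective is nonzero
and satisfies the fixed-point equation `x⋆ = (Σ + (λ/‖x⋆‖) I)⁻¹ v`. -/
theorem bcd_minimizer_fixed_point
    (d : ℕ) (S : Fin d → ℝ) (hS : ∀ i, 0 ≤ S i)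
    (v : EuclideanSpace ℝ (Fin d)) (lam : ℝ) (hlam : 0 < lam)
    (hker : ∀ i, S i = 0 → v i = 0)
    (hv : lam < ‖v‖)
    (xstar : EuclideanSpace ℝ (Fin d))
    (hmin : ∀ x : EuclideanSpace ℝ (Fin d),
      (1 / 2) * (∑ i, S i * (xstar i) ^ 2) - (∑ i, v i * xstar i) + lam * ‖xstar‖
        ≤ (1 / 2) * (∑ i, S i * (x i) ^ 2) - (∑ i, v i * x i) + lam * ‖x‖) :
    xstar ≠ 0 ∧ ∀ i, xstar i = v i / (S i + lam / ‖xstar‖) := by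
  have normsq : ∀ y : EuclideanSpace ℝ (Fin d), ‖y‖ = Real.sqrt (∑ j, (y j)^2) := by
    intro y
    rw [EuclideanSpace.norm_eq]
    congr 1
    exact Finset.sum_congr rfl (fun j _ => by rw [Real.norm_eq_abs, sq_abs])
  -- Step 1: xstar ≠ 0
  have hxne : xstar ≠ 0 := by
    intro h0
    set A := ∑ j, S j * (v j)^2 with hA
    have hA0 : 0 ≤ A := Finset.sum_nonneg (fun j _ => mul_nonneg (hS j) (sq_nonneg _))
    have hv0 : (0:ℝ) < ‖v‖ := lt_trans hlam hv
    set t := ‖v‖ * (‖v‖ - lam) / (A + 1) with ht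
    have htpos : 0 < t := div_pos (mul_pos hv0 (by linarith)) (by linarith)
    have htA : t * (A + 1) = ‖v‖ * (‖v‖ - lam) := by
      rw [ht, div_mul_cancel₀]; exact ne_of_gt (by linarith)
    have hvsq : (∑ j, (v j)^2) = ‖v‖^2 := by
      rw [normsq v, Real.sq_sqrt (Finset.sum_nonneg fun j _ => sq_nonneg _)]
    have hlt := hmin (t • v)
    rw [h0] at hlt
    have htv : ∀ j, (t • v) j = t * v j := fun j => rfl
    have h1 : (∑ j, S j * ((t • v) j)^2) = t^2 * A := by
      simp only [htv]
      rw [hA, Finset.mul_sum]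
      exact Finset.sum_congr rfl (fun j _ => by ring)
    have h2 : (∑ j, v j * ((t • v) j)) = t * ‖v‖^2 := by
      simp only [htv]
      rw [← hvsq, Finset.mul_sum]
      exact Finset.sum_congr rfl (fun j _ => by ring)
    have h3 : ‖t • v‖ = t * ‖v‖ := by
      rw [norm_smul, Real.norm_eq_abs, abs_of_pos htpos]
    have hz : ∀ j, (0 : EuclideanSpace ℝ (Fin d)) j = 0 := fun j => rfl
    simp only [h1, h2, h3, hz, norm_zero] at hlt
    simp only [mul_zero, zero_pow, ne_eq, OfNat.ofNat_ne_zero, not_false_eq_true,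
      Finset.sum_const_zero] at hlt
    -- hlt : 0 ≤ (1/2)*(t^2*A) - t*‖v‖^2 + lam*(t*‖v‖)
    nlinarith [mul_pos htpos htpos, mul_lt_mul_of_pos_left (lt_of_le_of_lt (by nlinarith : t * A ≤ t * (A+1)) (by nlinarith [htA] : t * (A + 1) < 2 * (‖v‖ * (‖v‖ - lam)))) htpos]
  refine ⟨hxne, fun i => ?_⟩
  -- Step 2: stationarity in coordinate i
  set n := ‖xstar‖ with hn
  have hnpos : 0 < n := norm_pos_iff.mpr hxne
  set B := ∑ j ∈ Finset.univ.erase i, (xstar j)^2 with hB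
  have hsplit : (∑ j, (xstar j)^2) = (xstar i)^2 + B := by
    rw [hB, ← Finset.add_sum_erase _ _ (Finset.mem_univ i)]
  have hnB : Real.sqrt ((xstar i)^2 + B) = n := by
    rw [← hsplit, ← normsq]
  set C1 := ∑ j ∈ Finset.univ.erase i, S j * (xstar j)^2 with hC1
  set C2 := ∑ j ∈ Finset.univ.erase i, v j * (xstar j) with hC2
  set h : ℝ → ℝ := fun s => (1/2) * (S i * s^2 + C1) - (v i * s + C2) + lam * Real.sqrt (s^2 + B)
    with hh
  have hBpos : 0 < (xstar i)^2 + B := by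
    rw [← Real.sqrt_pos, hnB]; exact hnpos
  set upd : ℝ → EuclideanSpace ℝ (Fin d) := fun s => WithLp.toLp 2 (Function.update xstar i s) with hupdd
  have e1 : ∀ s' : ℝ, (∑ j, S j * ((upd s') j)^2) = S i * s'^2 + C1 := by
    intro s'
    rw [← Finset.add_sum_erase _ _ (Finset.mem_univ i)]
    show S i * (Function.update xstar i s' i)^2 + _ = _
    rw [Function.update_self, hC1]
    congr 1
    exact Finset.sum_congr rfl fun j hj =>
      by show S j * (Function.update xstar i s' j)^2 = _
         rw [Function.update_of_ne (Finset.ne_of_mem_erase hj)]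
  have e2 : ∀ s' : ℝ, (∑ j, v j * ((upd s') j)) = v i * s' + C2 := by
    intro s'
    rw [← Finset.add_sum_erase _ _ (Finset.mem_univ i)]
    show v i * (Function.update xstar i s' i) + _ = _
    rw [Function.update_self, hC2]
    congr 1
    exact Finset.sum_congr rfl fun j hj =>
      by show v j * (Function.update xstar i s' j) = _
         rw [Function.update_of_ne (Finset.ne_of_mem_erase hj)]
  have e3 : ∀ s' : ℝ, ‖upd s'‖ = Real.sqrt (s'^2 + B) := by
    intro s'
    rw [normsq, ← Finset.add_sum_erase _ _ (Finset.mem_univ i)]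
    show Real.sqrt ((Function.update xstar i s' i)^2 + _) = _
    rw [Function.update_self, hB]
    congr 2
    exact Finset.sum_congr rfl fun j hj =>
      by show (Function.update xstar i s' j)^2 = _
         rw [Function.update_of_ne (Finset.ne_of_mem_erase hj)]
  have eself : upd (xstar i) = xstar := by
    show WithLp.toLp 2 (Function.update xstar.ofLp i (xstar.ofLp i)) = xstar
    rw [Function.update_eq_self]
  have key : ∀ s : ℝ, h (xstar i) ≤ h s := by
    intro s
    have hupd := hmin (upd s)
    have hfx : h (xstar i) = (1 / 2) * (∑ j, S j * (xstar j) ^ 2) - (∑ j, v j * xstar j)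
        + lam * ‖xstar‖ := by
      rw [hh]
      simp only
      rw [← e1 (xstar i), ← e2 (xstar i), ← e3 (xstar i), eself]
    rw [hfx, hh]
    simp only
    rw [← e1 s, ← e2 s, ← e3 s]
    exact hupd
  have hloc : IsLocalMin h (xstar i) := Filter.Eventually.of_forall key
  have hne0 : (xstar i)^2 + B ≠ 0 := ne_of_gt hBpos
  have d3 : HasDerivAt (fun s : ℝ => Real.sqrt (s^2 + B)) (xstar i / n) (xstar i) := by
    have inner : HasDerivAt (fun s : ℝ => s^2 + B) (2 * xstar i) (xstar i) := by
      have := (hasDerivAt_pow 2 (xstar i)).add_const B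
      simpa using this
    have outer := (Real.hasDerivAt_sqrt hne0).comp (xstar i) inner
    have : (Real.sqrt ∘ fun s : ℝ => s^2 + B) = fun s : ℝ => Real.sqrt (s^2 + B) := rfl
    rw [this] at outer
    exact outer.congr_deriv (by rw [hnB]; field_simp <;> ring)
  have d1 : HasDerivAt (fun s : ℝ => (1/2) * (S i * s^2 + C1)) (S i * xstar i) (xstar i) := by
    have := (((hasDerivAt_pow 2 (xstar i)).const_mul (S i)).add_const C1).const_mul (1/2 : ℝ)
    exact this.congr_deriv (by simp <;> ring)
  have d2 : HasDerivAt (fun s : ℝ => v i * s + C2) (v i) (xstar i) := by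
    have := ((hasDerivAt_id (xstar i)).const_mul (v i)).add_const C2
    simpa using this
  have dh : HasDerivAt h (S i * xstar i - v i + lam * (xstar i / n)) (xstar i) :=
    (d1.sub d2).add (d3.const_mul lam)
  have hD0 : S i * xstar i - v i + lam * (xstar i / n) = 0 := hloc.hasDerivAt_eq_zero dh
  have hden : 0 < S i + lam / n := add_pos_of_nonneg_of_pos (hS i) (div_pos hlam hnpos)
  rw [eq_div_iff (ne_of_gt hden)]
  have hn0 : n ≠ 0 := ne_of_gt hnpos
  field_simp at hD0 ⊢
  linarith [hD0]
end

section
/- If x⋆ ≠ 0 minimizes f(x) = (1/2) xᵀΣx - vᵀx + λ‖x‖₂ with Σ diagonal positive semidefinite and λ > 0, then h := ‖x⋆‖₂ satisfies Σ_{i=1}^d v_i² / (Σ_{ii} h + λ)² = 1. -/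
open Finset in
/-- A nonzero minimizer `x⋆` of the block-coordinate objective has norm `h`
satisfying the norm equation `∑ vᵢ²/(Σᵢᵢ h + λ)² = 1`. -/
theorem bcd_norm_equation
    (d : ℕ) (S : Fin d → ℝ) (hS : ∀ i, 0 ≤ S i)
    (v : EuclideanSpace ℝ (Fin d)) (lam : ℝ) (hlam : 0 < lam)
    (xstar : EuclideanSpace ℝ (Fin d)) (hne : xstar ≠ 0)
    (hmin : ∀ x : EuclideanSpace ℝ (Fin d),
      (1 / 2) * (∑ i, S i * (xstar i) ^ 2) - (∑ i, v i * xstar i) + lam * ‖xstar‖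
        ≤ (1 / 2) * (∑ i, S i * (x i) ^ 2) - (∑ i, v i * x i) + lam * ‖x‖) :
    ∑ i, (v i) ^ 2 / (S i * ‖xstar‖ + lam) ^ 2 = 1 := by
  have hx : (0:ℝ) < ‖xstar‖ := norm_pos_iff.mpr hne
  have hnormsq : ‖xstar‖ ^ 2 = ∑ j, (xstar j) ^ 2 := by
    rw [EuclideanSpace.norm_eq, Real.sq_sqrt (by positivity)]
    refine Finset.sum_congr rfl fun j _ => by simp [Real.norm_eq_abs, sq_abs]
  have hsq : Real.sqrt (∑ j, (xstar j) ^ 2) = ‖xstar‖ := by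
    rw [← hnormsq, Real.sqrt_sq hx.le]
  have key : ∀ i, S i * xstar i + lam * (xstar i / ‖xstar‖) = v i := by
    intro i
    set c : Fin d → ℝ := fun j => if j = i then 1 else 0 with hc
    set F : ℝ → ℝ := fun t =>
      (1/2) * (∑ j, S j * (xstar j + t * c j)^2)
        - (∑ j, v j * (xstar j + t * c j))
        + lam * Real.sqrt (∑ j, (xstar j + t * c j)^2) with hF
    have hcoord : ∀ (t : ℝ) (j : Fin d),
        (xstar + t • EuclideanSpace.single i (1:ℝ)) j = xstar j + t * c j := by
      intro t j
      simp [hc, EuclideanSpace.single_apply]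
    have hnorm : ∀ t : ℝ, ‖xstar + t • EuclideanSpace.single i (1:ℝ)‖
        = Real.sqrt (∑ j, (xstar j + t * c j)^2) := by
      intro t
      rw [EuclideanSpace.norm_eq]
      congr 1
      refine Finset.sum_congr rfl fun j _ => ?_
      rw [hcoord t j]
      simp [Real.norm_eq_abs, sq_abs]
    have hmin' : ∀ t : ℝ, F 0 ≤ F t := by
      intro t
      have h0 : F 0 = (1 / 2) * (∑ j, S j * (xstar j) ^ 2) - (∑ j, v j * xstar j)
          + lam * ‖xstar‖ := by
        simp [hF, hsq]
      have ht := hmin (xstar + t • EuclideanSpace.single i (1:ℝ))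
      rw [h0]
      calc (1 / 2) * (∑ j, S j * (xstar j) ^ 2) - (∑ j, v j * xstar j) + lam * ‖xstar‖
          ≤ _ := ht
        _ = F t := by
            simp only [hF]
            rw [hnorm t]
            congr 1
            · congr 1
              · congr 1
                exact Finset.sum_congr rfl fun j _ => by rw [hcoord t j]
              · exact Finset.sum_congr rfl fun j _ => by rw [hcoord t j]
    have hloc : IsLocalMin F 0 := Filter.Eventually.of_forall hmin'
    have hq : HasDerivAt (fun t : ℝ => ∑ j, (xstar j + t * c j)^2)
        (∑ j, 2 * xstar j * c j) 0 := by
      apply HasDerivAt.fun_sum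
      intro j _
      have h1 : HasDerivAt (fun t : ℝ => xstar j + t * c j) (c j) 0 := by
        simpa using ((hasDerivAt_id (0:ℝ)).mul_const (c j)).const_add (xstar j)
      simpa [mul_comm, mul_assoc, mul_left_comm] using h1.fun_pow 2
    have hq0 : (∑ j, (xstar j + (0:ℝ) * c j)^2) = ‖xstar‖ ^ 2 := by
      rw [hnormsq]; simp
    have hqne : (∑ j, (xstar j + (0:ℝ) * c j)^2) ≠ 0 := by
      rw [hq0]; positivity
    have hsqrt : HasDerivAt (fun t : ℝ => Real.sqrt (∑ j, (xstar j + t * c j)^2))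
        ((∑ j, 2 * xstar j * c j) / (2 * ‖xstar‖)) 0 := by
      have := hq.sqrt hqne
      simpa [hq0, Real.sqrt_sq hx.le, hsq] using this
    have hsum1 : HasDerivAt (fun t : ℝ => ∑ j, S j * (xstar j + t * c j)^2)
        (∑ j, S j * (2 * xstar j * c j)) 0 := by
      apply HasDerivAt.fun_sum
      intro j _
      have h1 : HasDerivAt (fun t : ℝ => xstar j + t * c j) (c j) 0 := by
        simpa using ((hasDerivAt_id (0:ℝ)).mul_const (c j)).const_add (xstar j)
      have := (h1.pow 2).const_mul (S j)
      simpa [mul_comm, mul_assoc, mul_left_comm] using this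
    have hsum2 : HasDerivAt (fun t : ℝ => ∑ j, v j * (xstar j + t * c j))
        (∑ j, v j * c j) 0 := by
      apply HasDerivAt.fun_sum
      intro j _
      have h1 : HasDerivAt (fun t : ℝ => xstar j + t * c j) (c j) 0 := by
        simpa using ((hasDerivAt_id (0:ℝ)).mul_const (c j)).const_add (xstar j)
      simpa using h1.const_mul (v j)
    have hFderiv : HasDerivAt F
        ((1/2) * (∑ j, S j * (2 * xstar j * c j)) - (∑ j, v j * c j)
          + lam * ((∑ j, 2 * xstar j * c j) / (2 * ‖xstar‖))) 0 :=
      ((hsum1.const_mul (1/2)).sub hsum2).add (hsqrt.const_mul lam)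
    have hzero := hloc.hasDerivAt_eq_zero hFderiv
    have hsimp1 : (∑ j, S j * (2 * xstar j * c j)) = 2 * (S i * xstar i) := by
      simp [hc, mul_ite, Finset.sum_ite_eq']; ring
    have hsimp2 : (∑ j, v j * c j) = v i := by
      simp [hc, mul_ite, Finset.sum_ite_eq']
    have hsimp3 : (∑ j, 2 * xstar j * c j) = 2 * xstar i := by
      simp [hc, mul_ite, Finset.sum_ite_eq']
    rw [hsimp1, hsimp2, hsimp3] at hzero
    have hxne : ‖xstar‖ ≠ 0 := hx.ne'
    field_simp at hzero ⊢
    linarith [hzero]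
  have hden : ∀ i, (0:ℝ) < S i * ‖xstar‖ + lam := fun i => by
    have := mul_nonneg (hS i) hx.le; linarith
  have hterm : ∀ i, (v i) ^ 2 / (S i * ‖xstar‖ + lam) ^ 2
      = (xstar i) ^ 2 / ‖xstar‖ ^ 2 := by
    intro i
    have hvi : v i * ‖xstar‖ = xstar i * (S i * ‖xstar‖ + lam) := by
      have := key i
      field_simp at this
      linarith [this]
    have h1 : (v i) ^ 2 * ‖xstar‖ ^ 2 = (xstar i) ^ 2 * (S i * ‖xstar‖ + lam) ^ 2 := by
      have := congrArg (fun z => z ^ 2) hvi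
      simpa [mul_pow] using this
    have hd := (hden i).ne'
    field_simp
    linarith [h1]
  rw [Finset.sum_congr rfl fun i _ => hterm i, ← Finset.sum_div, ← hnormsq]
  field_simp
end

section
/- For the multinomial log-partition A(η) = log(Σ_{j=1}^c exp(η_j)) on ℝ^c, twice the diagonal of its Hessian dominates the Hessian: ∇²A(η) ⪯ 2 diag(∇²A(η)), i.e., for all u ∈ ℝ^c, uᵀ∇²A(η)u ≤ 2 Σ_j (∇²A(η))_{jj} u_j². Here ∇²A(η) = diag(π) - ππᵀ with π_j = exp(η_j)/Σ_k exp(η_k). -/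
open Finset in
/-- Twice the diagonal of the multinomial Hessian `diag(π) - ππᵀ` dominates it:
`uᵀ(diag(π) - ππᵀ)u ≤ 2 ∑ πⱼ(1-πⱼ)uⱼ²`. -/
theorem multinomial_hessian_diag_majorize
    (c : ℕ) (hc : 1 ≤ c) (eta : Fin c → ℝ) (pi : Fin c → ℝ)
    (hpi : ∀ j, pi j = Real.exp (eta j) / ∑ k, Real.exp (eta k)) :
    ∀ u : Fin c → ℝ,
      (∑ j, pi j * (u j) ^ 2) - (∑ j, pi j * u j) ^ 2
        ≤ 2 * ∑ j, pi j * (1 - pi j) * (u j) ^ 2 := by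
  intro u
  haveI : Nonempty (Fin c) := ⟨⟨0, hc⟩⟩
  have hS : 0 < ∑ k, Real.exp (eta k) :=
    Finset.sum_pos (fun k _ => Real.exp_pos _) Finset.univ_nonempty
  have hp0 : ∀ j, 0 ≤ pi j := fun j => by
    rw [hpi j]; positivity
  have hsum : ∑ j, pi j = 1 := by
    simp_rw [hpi, ← Finset.sum_div]
    exact div_self hS.ne'
  -- key: diagonal of nonnegative double sum
  have key : ∑ j, pi j * pi j * (u j + u j) ^ 2
      ≤ ∑ j, ∑ k, pi j * pi k * (u j + u k) ^ 2 := by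
    apply Finset.sum_le_sum
    intro j _
    refine Finset.single_le_sum (f := fun k => pi j * pi k * (u j + u k) ^ 2)
      (fun k _ => ?_) (Finset.mem_univ j)
    have h1 := hp0 j; have h2 := hp0 k
    positivity
  have expand : ∑ j, ∑ k, pi j * pi k * (u j + u k) ^ 2
      = 2 * (∑ j, pi j * (u j) ^ 2) + 2 * (∑ j, pi j * u j) ^ 2 := by
    have h : ∀ j : Fin c, ∑ k, pi j * pi k * (u j + u k) ^ 2
        = pi j * (u j) ^ 2 + pi j * (∑ k, pi k * (u k) ^ 2)
          + 2 * (pi j * u j) * (∑ k, pi k * u k) := by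
      intro j
      have h2 : ∀ k : Fin c, pi j * pi k * (u j + u k) ^ 2
          = pi j * (u j) ^ 2 * pi k + pi j * (pi k * (u k) ^ 2)
            + 2 * (pi j * u j) * (pi k * u k) := fun k => by ring
      simp only [h2, Finset.sum_add_distrib, ← Finset.mul_sum, ← Finset.sum_mul, hsum,
        mul_one]
    simp only [h, Finset.sum_add_distrib, ← Finset.sum_mul, ← Finset.mul_sum, hsum]
    ring
  have diag : ∑ j, pi j * pi j * (u j + u j) ^ 2
      = 4 * ∑ j, pi j * pi j * (u j) ^ 2 := by
    rw [Finset.mul_sum]; apply Finset.sum_congr rfl; intros; ring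
  have rhs : ∑ j, pi j * (1 - pi j) * (u j) ^ 2
      = (∑ j, pi j * (u j) ^ 2) - ∑ j, pi j * pi j * (u j) ^ 2 := by
    rw [← Finset.sum_sub_distrib]; apply Finset.sum_congr rfl; intros; ring
  rw [expand, diag] at key
  rw [rhs]
  linarith
end

section
/- Let Σ be diagonal with Σ_{ii} ≥ 0, λ > 0, and suppose v_i = 0 for all i with Σ_{ii} = 0 and ‖v‖₂ > λ. Let h > 0 be the unique root of φ(h) = Σ_i v_i²/(Σ_{ii}h+λ)² - 1. Then the vector x with components x_i = v_i/(Σ_{ii} + λ/h) satisfies ‖x‖₂ = h and is a stationary point of f(x) = (1/2)xᵀΣx - vᵀx + λ‖x‖₂ (it satisfies the subgradient optimality condition Σx - v + λ x/‖x‖₂ = 0). -/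
open Finset in
/-- If `h > 0` is a root of `φ`, then `x` with `xᵢ = vᵢ/(Σᵢᵢ + λ/h)` has norm `h`
and satisfies the stationarity condition `Σx - v + λ x/‖x‖ = 0`. -/
theorem bcd_solution_from_root
    (d : ℕ) (S : Fin d → ℝ) (hS : ∀ i, 0 ≤ S i)
    (v : EuclideanSpace ℝ (Fin d)) (lam : ℝ) (hlam : 0 < lam)
    (hker : ∀ i, S i = 0 → v i = 0)
    (hv : lam < ‖v‖)
    (h : ℝ) (hh : 0 < h)
    (hroot : (∑ i, (v i) ^ 2 / (S i * h + lam) ^ 2) - 1 = 0)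
    (x : EuclideanSpace ℝ (Fin d))
    (hx : ∀ i, x i = v i / (S i + lam / h)) :
    ‖x‖ = h ∧ ∀ i, S i * x i - v i + lam * (x i / ‖x‖) = 0 := by
  have hpos : ∀ i, 0 < S i * h + lam := fun i =>
    add_pos_of_nonneg_of_pos (mul_nonneg (hS i) hh.le) hlam
  have hxeq : ∀ i, x i = h * v i / (S i * h + lam) := by
    intro i
    rw [hx i]
    field_simp
  have hnorm : ‖x‖ = h := by
    rw [EuclideanSpace.norm_eq]
    have : ∑ i, ‖x i‖ ^ 2 = h ^ 2 := by
      calc ∑ i, ‖x i‖ ^ 2 = ∑ i, h ^ 2 * ((v i) ^ 2 / (S i * h + lam) ^ 2) := by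
            refine Finset.sum_congr rfl fun i _ => ?_
            rw [Real.norm_eq_abs, sq_abs, hxeq i]
            field_simp
        _ = h ^ 2 * ∑ i, (v i) ^ 2 / (S i * h + lam) ^ 2 := by rw [Finset.mul_sum]
        _ = h ^ 2 := by
            have : (∑ i, (v i) ^ 2 / (S i * h + lam) ^ 2) = 1 := by linarith
            rw [this, mul_one]
    rw [this, Real.sqrt_sq hh.le]
  refine ⟨hnorm, fun i => ?_⟩
  rw [hnorm, hxeq i]
  have := (hpos i).ne'
  field_simp
  ring
end
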